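/- Unrolling of iteration: for every program C, expressions e, e′ and state σ, the iteration semantics satisfies ⟦iter(C,e,e′)⟧(σ) = ∑_{n∈ℕ} ⟦(assume e; C)ⁿ ; assume e′⟧(σ), where D⁰ = skip and D^{n+1} = Dⁿ ; D, and the infinite sum is taken in W(Σ) (pointwise, as the supremum of finite partial sums). -/

import Mathlib

open scoped Classical

universe u v

/-- A semiring that is simultaneously a complete lattice with bottom `0`, whose order
coincides with the natural (additive) order, and in which addition and multiplication
are Scott-continuous. -/
class OLSemiring (U : Type u) extends Semiring U, CompleteLattice U where
  bot_eq_zero : (⊥ : U) = 0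
  le_iff_exists_add : ∀ a b : U, a ≤ b ↔ ∃ c, a + c = b
  add_scott : ∀ (D : Set U), D.Nonempty → DirectedOn (· ≤ ·) D → ∀ y : U,
    sSup ((fun x => x + y) '' D) = sSup D + y
  mul_scott_right : ∀ (D : Set U), D.Nonempty → DirectedOn (· ≤ ·) D → ∀ y : U,
    sSup ((fun x => x * y) '' D) = sSup D * y
  mul_scott_left : ∀ (D : Set U), D.Nonempty → DirectedOn (· ≤ ·) D → ∀ y : U,
    sSup ((fun x => y * x) '' D) = y * sSup D

variable {U : Type u} [OLSemiring U]

/-- Infinite sum: supremum over finite subfamilies of finite sums. -/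
noncomputable def wsum {I : Type v} (f : I → U) : U :=
  ⨆ J : Finset I, ∑ i ∈ J, f i

/-- The unit of the weighting monad. -/
noncomputable def eta {X : Type u} (x : X) : X → U :=
  fun y => if y = x then 1 else 0

/-- Kleisli extension: `kext f m y = ∑_{x ∈ supp m} m x * f x y`. -/
noncomputable def kext {X Y : Type u} (f : X → Y → U) (m : X → U) : Y → U :=
  fun y => wsum (fun x : Function.support m => m x.1 * f x.1 y)

/-- Syntax of tests over primitive tests indexed by `TI`. -/
inductive TestExpr (TI : Type u) : Type u where
  | prim (t : TI)
  | tt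
  | ff
  | and (b₁ b₂ : TestExpr TI)
  | or (b₁ b₂ : TestExpr TI)
  | not (b : TestExpr TI)

/-- The set of states at which a test is true. -/
def testSet {St TI : Type u} (tsem : TI → Set St) : TestExpr TI → Set St
  | .prim t => tsem t
  | .tt => Set.univ
  | .ff => ∅
  | .and b₁ b₂ => testSet tsem b₁ ∩ testSet tsem b₂
  | .or b₁ b₂ => testSet tsem b₁ ∪ testSet tsem b₂
  | .not b => (testSet tsem b)ᶜ

/-- Expressions: a test or a weight. -/
inductive Expr (U : Type u) (TI : Type u) : Type u where
  | test (b : TestExpr TI)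
  | wt (u : U)

/-- Evaluation of expressions into weights. -/
noncomputable def eeval {St TI : Type u} (tsem : TI → Set St) : Expr U TI → St → U
  | .test b => fun σ => if σ ∈ testSet tsem b then 1 else 0
  | .wt u => fun _ => u

/-- Programs. -/
inductive Prog (U St TI Act : Type u) : Type u where
  | skip
  | seq (C₁ C₂ : Prog U St TI Act)
  | choice (C₁ C₂ : Prog U St TI Act)
  | assume (e : Expr U TI)
  | iter (C : Prog U St TI Act) (e e' : Expr U TI)
  | act (a : Act)

/-- The characteristic function of iteration. -/
noncomputable def Phi {St : Type u} (w w' : St → U) (g : St → St → U)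
    (f : St → St → U) : St → St → U :=
  fun σ τ => w σ * kext f (g σ) τ + w' σ * eta σ τ

/-- Denotational semantics of programs. -/
noncomputable def sem {St TI Act : Type u} (tsem : TI → Set St)
    (asem : Act → St → St → U) : Prog U St TI Act → St → St → U
  | .skip => fun σ => eta σ
  | .seq C₁ C₂ => fun σ => kext (sem tsem asem C₂) (sem tsem asem C₁ σ)
  | .choice C₁ C₂ => fun σ τ => sem tsem asem C₁ σ τ + sem tsem asem C₂ σ τ
  | .assume e => fun σ τ => eeval tsem e σ * eta σ τ
  | .iter C e e' =>
      ⨆ n : ℕ, (Phi (eeval tsem e) (eeval tsem e') (sem tsem asem C))^[n] (fun _ _ => 0)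
  | .act a => asem a

/-- Outcome assertions. -/
abbrev OA (U : Type u) (St : Type u) := Set (St → U)

/-- Binary outcome conjunction. -/
def oplus {St : Type u} (φ ψ : OA U St) : OA U St :=
  { m | ∃ m₁ ∈ φ, ∃ m₂ ∈ ψ, m = fun σ => m₁ σ + m₂ σ }

/-- Indexed outcome conjunction. -/
noncomputable def bigOplus {St T : Type u} (φ : T → OA U St) : OA U St :=
  { m | ∃ f : T → St → U, (∀ t, f t ∈ φ t) ∧ m = fun σ => wsum (fun t => f t σ) }

/-- Right scaling of an assertion by a weight. -/
def odotR {St : Type u} (φ : OA U St) (u : U) : OA U St :=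
  { m' | ∃ m ∈ φ, m' = fun σ => m σ * u }

/-- Left scaling of an assertion by a weight. -/
def odotL {St : Type u} (u : U) (φ : OA U St) : OA U St :=
  { m' | ∃ m ∈ φ, m' = fun σ => u * m σ }

/-- `φ ⊨ e = u` : the expression `e` evaluates to `u` on the support of every `m ∈ φ`. -/
def entailsEq {St TI : Type u} (tsem : TI → Set St) (φ : OA U St)
    (e : Expr U TI) (u : U) : Prop :=
  ∀ m ∈ φ, ∀ σ, m σ ≠ 0 → eeval tsem e σ = u

/-- Semantic validity of an outcome triple. -/
def valid {St TI Act : Type u} (tsem : TI → Set St) (asem : Act → St → St → U)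
    (φ : OA U St) (C : Prog U St TI Act) (ψ : OA U St) : Prop :=
  ∀ m ∈ φ, kext (sem tsem asem C) m ∈ ψ

/-- The family `ψ` of assertions converges to `ψlim`. -/
def convergesTo {St : Type u} (ψ : ℕ → OA U St) (ψlim : OA U St) : Prop :=
  ∀ ms : ℕ → St → U, (∀ n, ms n ∈ ψ n) → (fun σ => wsum (fun n => ms n σ)) ∈ ψlim

/-- The Outcome Logic proof system (with oracle axioms for valid atomic triples). -/
inductive Deriv {St TI Act : Type u} (tsem : TI → Set St) (asem : Act → St → St → U) :
    OA U St → Prog U St TI Act → OA U St → Prop where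
  | atom {φ ψ} (a : Act) :
      valid tsem asem φ (.act a) ψ → Deriv tsem asem φ (.act a) ψ
  | skip (φ) : Deriv tsem asem φ .skip φ
  | seq {φ ϑ ψ C₁ C₂} :
      Deriv tsem asem φ C₁ ϑ → Deriv tsem asem ϑ C₂ ψ →
      Deriv tsem asem φ (.seq C₁ C₂) ψ
  | plus {φ ψ₁ ψ₂ C₁ C₂} :
      Deriv tsem asem φ C₁ ψ₁ → Deriv tsem asem φ C₂ ψ₂ →
      Deriv tsem asem φ (.choice C₁ C₂) (oplus ψ₁ ψ₂)
  | assume {φ e u} :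
      entailsEq tsem φ e u → Deriv tsem asem φ (.assume e) (odotR φ u)
  | iter {C e e'} (φn ψn : ℕ → OA U St) (ψlim : OA U St) :
      convergesTo ψn ψlim →
      (∀ n, Deriv tsem asem (φn n) (.seq (.assume e) C) (φn (n + 1))) →
      (∀ n, Deriv tsem asem (φn n) (.assume e') (ψn n)) →
      Deriv tsem asem (φn 0) (.iter C e e') ψlim
  | false (C φ) : Deriv tsem asem ∅ C φ
  | true (C φ) : Deriv tsem asem φ C Set.univ
  | scale {φ ψ C} (u : U) :
      Deriv tsem asem φ C ψ → Deriv tsem asem (odotL u φ) C (odotL u ψ)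
  | disj {φ₁ φ₂ ψ₁ ψ₂ C} :
      Deriv tsem asem φ₁ C ψ₁ → Deriv tsem asem φ₂ C ψ₂ →
      Deriv tsem asem (φ₁ ∪ φ₂) C (ψ₁ ∪ ψ₂)
  | conj {φ₁ φ₂ ψ₁ ψ₂ C} :
      Deriv tsem asem φ₁ C ψ₁ → Deriv tsem asem φ₂ C ψ₂ →
      Deriv tsem asem (φ₁ ∩ φ₂) C (ψ₁ ∩ ψ₂)
  | choice {T : Type u} {C} (φ φ' : T → OA U St) :
      (∀ t, Deriv tsem asem (φ t) C (φ' t)) →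
      Deriv tsem asem (bigOplus φ) C (bigOplus φ')
  | exists_ {T : Type u} {C} (φ φ' : T → OA U St) :
      (∀ t, Deriv tsem asem (φ t) C (φ' t)) →
      Deriv tsem asem (⋃ t, φ t) C (⋃ t, φ' t)
  | conseq {φ φ' ψ ψ' C} :
      φ' ⊆ φ → Deriv tsem asem φ C ψ → ψ ⊆ ψ' →
      Deriv tsem asem φ' C ψ'

/-- `ppow C n` is the `n`-fold sequential composition `Cⁿ` (`C⁰ = skip`, `C^{n+1} = Cⁿ;C`). -/
def ppow {U St TI Act : Type u} (C : Prog U St TI Act) : ℕ → Prog U St TI Act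
  | 0 => .skip
  | n + 1 => .seq (ppow C n) C


section Lemmas

variable {U : Type u} [OLSemiring U]

instance (priority := 100) OLSemiring.toIsOrderedAddMonoid : IsOrderedAddMonoid U where
  add_le_add_left := by
    intro a b h c
    obtain ⟨d, hd⟩ := (OLSemiring.le_iff_exists_add a b).1 h
    exact (OLSemiring.le_iff_exists_add _ _).2 ⟨d, by rw [add_right_comm, hd]⟩

instance (priority := 100) OLSemiring.toCanon : CanonicallyOrderedAdd U where
  exists_add_of_le := by
    intro a b h
    obtain ⟨c, hc⟩ := (OLSemiring.le_iff_exists_add a b).1 h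
    exact ⟨c, hc.symm⟩
  le_self_add := fun a b => (OLSemiring.le_iff_exists_add _ _).2 ⟨b, rfl⟩
  le_add_self := fun a b => (OLSemiring.le_iff_exists_add _ _).2 ⟨b, add_comm _ _⟩

instance : CovariantClass U U (· * ·) (· ≤ ·) :=
  ⟨fun c a b h => by
    obtain ⟨d, hd⟩ := exists_add_of_le h
    rw [hd, mul_add]; exact le_self_add⟩

instance : CovariantClass U U (Function.swap (· * ·)) (· ≤ ·) :=
  ⟨fun c a b h => by
    obtain ⟨d, hd⟩ := exists_add_of_le h
    show a * c ≤ b * c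
    rw [hd, add_mul]; exact le_self_add⟩

lemma iSup_add_of_directed {ι : Type*} [Nonempty ι] (g : ι → U)
    (h : Directed (· ≤ ·) g) (y : U) : (⨆ i, g i) + y = ⨆ i, (g i + y) := by
  have := OLSemiring.add_scott (Set.range g) (Set.range_nonempty g)
    (directedOn_range.2 h) y
  rw [← Set.range_comp] at this
  exact this.symm

lemma add_iSup_of_directed {ι : Type*} [Nonempty ι] (g : ι → U)
    (h : Directed (· ≤ ·) g) (y : U) : y + (⨆ i, g i) = ⨆ i, (y + g i) := by
  rw [add_comm, iSup_add_of_directed g h y]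
  simp [add_comm]

lemma iSup_mul_of_directed {ι : Type*} [Nonempty ι] (g : ι → U)
    (h : Directed (· ≤ ·) g) (y : U) : (⨆ i, g i) * y = ⨆ i, (g i * y) := by
  have := OLSemiring.mul_scott_right (Set.range g) (Set.range_nonempty g)
    (directedOn_range.2 h) y
  rw [← Set.range_comp] at this
  exact this.symm

lemma mul_iSup_of_directed {ι : Type*} [Nonempty ι] (g : ι → U)
    (h : Directed (· ≤ ·) g) (y : U) : y * (⨆ i, g i) = ⨆ i, (y * g i) := by
  have := OLSemiring.mul_scott_left (Set.range g) (Set.range_nonempty g)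
    (directedOn_range.2 h) y
  rw [← Set.range_comp] at this
  exact this.symm

lemma directed_partialSums {I : Type v} (f : I → U) :
    Directed (· ≤ ·) (fun J : Finset I => ∑ i ∈ J, f i) := by
  have mono : Monotone (fun J : Finset I => ∑ i ∈ J, f i) :=
    fun J K hJK => Finset.sum_le_sum_of_subset hJK
  exact mono.directed_le

lemma sum_le_wsum {I : Type v} (f : I → U) (J : Finset I) :
    ∑ i ∈ J, f i ≤ wsum f :=
  le_iSup (fun J : Finset I => ∑ i ∈ J, f i) J

lemma wsum_congr {I : Type v} {f g : I → U} (h : ∀ i, f i = g i) :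
    wsum f = wsum g := congrArg wsum (funext h)

lemma wsum_zero {I : Type v} : wsum (fun _ : I => (0 : U)) = 0 :=
  le_antisymm (iSup_le fun J => by simp) zero_le

lemma wsum_mul {I : Type v} (f : I → U) (u : U) :
    wsum f * u = wsum (fun i => f i * u) := by
  rw [wsum, iSup_mul_of_directed _ (directed_partialSums f) u]
  simp only [Finset.sum_mul, wsum]

lemma mul_wsum {I : Type v} (f : I → U) (u : U) :
    u * wsum f = wsum (fun i => u * f i) := by
  rw [wsum, mul_iSup_of_directed _ (directed_partialSums f) u]
  simp only [Finset.mul_sum, wsum]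

lemma wsum_add {I : Type v} (f g : I → U) :
    wsum (fun i => f i + g i) = wsum f + wsum g := by
  apply le_antisymm
  · apply iSup_le; intro J
    rw [Finset.sum_add_distrib]
    exact add_le_add (sum_le_wsum f J) (sum_le_wsum g J)
  · rw [wsum, iSup_add_of_directed _ (directed_partialSums f) (wsum g)]
    apply iSup_le; intro J
    have hg : wsum g = ⨆ K : Finset I, ∑ i ∈ K, g i := rfl
    rw [hg, add_iSup_of_directed _ (directed_partialSums g) _]
    apply iSup_le; intro K
    calc (∑ i ∈ J, f i) + ∑ i ∈ K, g i
        ≤ (∑ i ∈ J ∪ K, f i) + ∑ i ∈ J ∪ K, g i :=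
          add_le_add (Finset.sum_le_sum_of_subset Finset.subset_union_left)
            (Finset.sum_le_sum_of_subset Finset.subset_union_right)
      _ = ∑ i ∈ J ∪ K, (f i + g i) := (Finset.sum_add_distrib).symm
      _ ≤ wsum (fun i => f i + g i) := sum_le_wsum _ _

lemma sum_wsum {I : Type v} {K : Type*} (s : Finset K) (f : K → I → U) :
    ∑ k ∈ s, wsum (f k) = wsum (fun i => ∑ k ∈ s, f k i) := by
  classical
  induction s using Finset.induction_on with
  | empty => simp [wsum_zero]
  | insert _ _ hk ih =>
      rw [Finset.sum_insert hk, ih, ← wsum_add]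
      exact wsum_congr fun i => by rw [Finset.sum_insert hk]

lemma wsum_subtype {X : Type v} (S : Set X) (g : X → U)
    (h : ∀ x ∉ S, g x = 0) :
    wsum (fun x : S => g x.1) = wsum g := by
  classical
  apply le_antisymm
  · apply iSup_le; intro J
    have : ∑ x ∈ J, g x.1 = ∑ x ∈ J.map (Function.Embedding.subtype _), g x := by
      rw [Finset.sum_map]; rfl
    rw [this]
    exact sum_le_wsum g _
  · apply iSup_le; intro K
    have h1 : ∑ x ∈ K, g x = ∑ x ∈ K.filter (· ∈ S), g x :=
      (Finset.sum_filter_of_ne (fun x _ hx => by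
        by_contra hxs; exact hx (h x hxs))).symm
    rw [h1, ← Finset.sum_subtype_eq_sum_filter]
    exact sum_le_wsum (fun x : S => g x.1) _

lemma wsum_single {X : Type v} (σ : X) (c : U) :
    wsum (fun x : X => if x = σ then c else 0) = c := by
  classical
  apply le_antisymm
  · apply iSup_le; intro J
    rw [Finset.sum_ite_eq' J σ (fun _ => c)]
    split_ifs <;> simp [zero_le]
  · calc c = ∑ x ∈ ({σ} : Finset X), (if x = σ then c else 0) := by simp
      _ ≤ _ := sum_le_wsum _ _

lemma wsum_equiv {I J : Type v} (e : I ≃ J) (f : J → U) :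
    wsum (fun i => f (e i)) = wsum f := by
  apply le_antisymm
  · apply iSup_le; intro K
    have : ∑ i ∈ K, f (e i) = ∑ j ∈ K.map e.toEmbedding, f j := by
      rw [Finset.sum_map]; rfl
    rw [this]; exact sum_le_wsum f _
  · apply iSup_le; intro K
    have : ∑ j ∈ K, f j = ∑ i ∈ K.map e.symm.toEmbedding, f (e i) := by
      rw [Finset.sum_map]; simp
    rw [this]; exact sum_le_wsum (fun i => f (e i)) _

lemma wsum_wsum {X Y : Type v} (h : X → Y → U) :
    wsum (fun x => wsum (fun y => h x y)) = wsum (fun p : X × Y => h p.1 p.2) := by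
  classical
  apply le_antisymm
  · apply iSup_le; intro J
    rw [sum_wsum]
    apply iSup_le; intro K
    calc ∑ y ∈ K, ∑ x ∈ J, h x y
        = ∑ x ∈ J, ∑ y ∈ K, h x y := Finset.sum_comm
      _ = ∑ p ∈ J ×ˢ K, h p.1 p.2 := (Finset.sum_product J K (fun p => h p.1 p.2)).symm
      _ ≤ _ := sum_le_wsum _ _
  · apply iSup_le; intro L
    have hsub : L ⊆ (L.image Prod.fst) ×ˢ (L.image Prod.snd) := by
      intro p hp
      rw [Finset.mem_product]
      exact ⟨Finset.mem_image_of_mem _ hp, Finset.mem_image_of_mem _ hp⟩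
    calc ∑ p ∈ L, h p.1 p.2
        ≤ ∑ p ∈ (L.image Prod.fst) ×ˢ (L.image Prod.snd), h p.1 p.2 :=
          Finset.sum_le_sum_of_subset hsub
      _ = ∑ x ∈ L.image Prod.fst, ∑ y ∈ L.image Prod.snd, h x y :=
          Finset.sum_product _ _ (fun p => h p.1 p.2)
      _ ≤ ∑ x ∈ L.image Prod.fst, wsum (fun y => h x y) :=
          Finset.sum_le_sum (fun x _ => sum_le_wsum _ _)
      _ ≤ _ := sum_le_wsum _ _

lemma kext_apply {X Y : Type u} (f : X → Y → U) (m : X → U) (y : Y) :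
    kext f m y = wsum (fun x => m x * f x y) :=
  wsum_subtype (Function.support m) (fun x => m x * f x y)
    (fun x hx => by show m x * f x y = 0; rw [Function.notMem_support.1 hx, zero_mul])

lemma kext_eta {X Y : Type u} (f : X → Y → U) (σ : X) :
    kext f (eta σ) = f σ := by
  funext y
  rw [kext_apply]
  have : (fun x => eta σ x * f x y) = fun x : X => if x = σ then f σ y else 0 := by
    funext x
    unfold eta
    by_cases hx : x = σ
    · subst hx; simp
    · simp [hx]
  rw [this, wsum_single]

lemma kext_eta' {X : Type u} (m : X → U) : kext (eta (U := U)) m = m := by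
  funext y
  rw [kext_apply]
  have : (fun x => m x * eta x y) = fun x : X => if x = y then m y else 0 := by
    funext x
    unfold eta
    by_cases hx : y = x
    · subst hx; simp
    · rw [if_neg hx, mul_zero, if_neg (fun hh => hx hh.symm)]
  rw [this, wsum_single]

lemma kext_assoc {X Y Z : Type u} (f : Y → Z → U) (g : X → Y → U) (m : X → U) :
    kext f (kext g m) = kext (fun x => kext f (g x)) m := by
  funext z
  simp only [kext_apply]
  calc wsum (fun y => (wsum fun x => m x * g x y) * f y z)
      = wsum (fun y => wsum fun x => (m x * g x y) * f y z) :=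
        wsum_congr fun y => wsum_mul _ _
    _ = wsum (fun p : Y × X => (m p.2 * g p.2 p.1) * f p.1 z) := wsum_wsum _
    _ = wsum (fun p : X × Y => (m p.1 * g p.1 p.2) * f p.2 z) :=
        (wsum_equiv (Equiv.prodComm X Y)
          (fun p : Y × X => (m p.2 * g p.2 p.1) * f p.1 z)).symm
    _ = wsum (fun p : X × Y => m p.1 * (g p.1 p.2 * f p.2 z)) :=
        wsum_congr fun p => mul_assoc _ _ _
    _ = wsum (fun x => wsum fun y => m x * (g x y * f y z)) := (wsum_wsum (fun x y => m x * (g x y * f y z))).symm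
    _ = wsum (fun x => m x * wsum fun y => g x y * f y z) :=
        wsum_congr fun x => (mul_wsum _ _).symm

lemma kext_sum {X Y : Type u} {K : Type*} (s : Finset K) (h : K → X → Y → U)
    (m : X → U) (y : Y) :
    kext (fun x y => ∑ k ∈ s, h k x y) m y = ∑ k ∈ s, kext (h k) m y := by
  simp only [kext_apply, Finset.mul_sum]
  rw [sum_wsum]

lemma kext_smul {X Y : Type u} (f : X → Y → U) (m : X → U) (u : U) (y : Y) :
    u * kext f m y = kext f (fun x => u * m x) y := by
  simp only [kext_apply]
  rw [mul_wsum]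
  exact wsum_congr fun x => (mul_assoc _ _ _).symm

lemma iSup_sum_range (c : ℕ → U) :
    (⨆ n, ∑ k ∈ Finset.range n, c k) = wsum c := by
  apply le_antisymm
  · exact iSup_le fun n => sum_le_wsum c (Finset.range n)
  · apply iSup_le; intro J
    obtain ⟨n, hn⟩ := J.exists_nat_subset_range
    exact le_trans (Finset.sum_le_sum_of_subset hn)
      (le_iSup (fun n => ∑ k ∈ Finset.range n, c k) n)

lemma sem_ppow_succ {St TI Act : Type u} (tsem : TI → Set St)
    (asem : Act → St → St → U) (D : Prog U St TI Act) (n : ℕ) (σ : St) :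
    sem tsem asem (ppow D (n + 1)) σ
      = kext (sem tsem asem (ppow D n)) (sem tsem asem D σ) := by
  induction n generalizing σ with
  | zero =>
      show kext (sem tsem asem D) (eta σ) = kext (sem tsem asem Prog.skip) _
      rw [kext_eta]
      show _ = kext eta _
      rw [kext_eta']
  | succ n ih =>
      show kext (sem tsem asem D) (sem tsem asem (ppow D (n + 1)) σ) = _
      rw [ih, kext_assoc]
      rfl

lemma phi_iterate {St TI Act : Type u} (tsem : TI → Set St)
    (asem : Act → St → St → U) (C : Prog U St TI Act) (e e' : Expr U TI) (n : ℕ) :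
    (Phi (eeval tsem e) (eeval tsem e') (sem tsem asem C))^[n] (fun _ _ => 0)
      = fun σ τ => ∑ k ∈ Finset.range n,
          sem tsem asem (.seq (ppow (.seq (.assume e) C) k) (.assume e')) σ τ := by
  induction n with
  | zero => simp
  | succ n ih =>
      rw [Function.iterate_succ_apply', ih]
      funext σ τ
      show eeval tsem e σ * kext _ (sem tsem asem C σ) τ
            + eeval tsem e' σ * eta σ τ = _
      rw [kext_sum, Finset.mul_sum, Finset.sum_range_succ']
      congr 1
      · apply Finset.sum_congr rfl
        intro k _
        -- show: w σ * kext (P k) (g σ) τ = P (k+1) σ τ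
        show eeval tsem e σ *
            kext (sem tsem asem (.seq (ppow (.seq (.assume e) C) k) (.assume e')))
              (sem tsem asem C σ) τ
          = sem tsem asem (.seq (ppow (.seq (.assume e) C) (k+1)) (.assume e')) σ τ
        have hD : sem tsem asem (Prog.seq (.assume e) C) σ
            = fun x => eeval tsem e σ * sem tsem asem C σ x := by
          show kext (sem tsem asem C)
              (fun τ' => eeval tsem e σ * eta σ τ') = _
          funext x
          rw [← kext_smul, kext_eta]
        show _ = kext (sem tsem asem (.assume e'))
            (sem tsem asem (ppow (Prog.seq (.assume e) C) (k+1)) σ) τ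
        rw [sem_ppow_succ, kext_assoc, hD, ← kext_smul]
        rfl
      · -- show: w' σ * eta σ τ = P 0 σ τ
        show eeval tsem e' σ * eta σ τ
          = sem tsem asem (.seq (ppow (.seq (.assume e) C) 0) (.assume e')) σ τ
        show _ = kext (sem tsem asem (.assume e')) (eta σ) τ
        rw [kext_eta]
        rfl

end Lemmas

/-- **Unrolling of iteration**:
`⟦iter(C,e,e′)⟧(σ) = ∑_{n∈ℕ} ⟦(assume e; C)ⁿ ; assume e′⟧(σ)`, the infinite sum taken
pointwise in `W(Σ)`. -/
theorem iter_unroll {U St TI Act : Type u} [OLSemiring U]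
    (tsem : TI → Set St) (asem : Act → St → St → U)
    (C : Prog U St TI Act) (e e' : Expr U TI) (σ : St) :
    sem tsem asem (.iter C e e') σ
      = fun τ => wsum (fun n : ℕ =>
          sem tsem asem (.seq (ppow (.seq (.assume e) C) n) (.assume e')) σ τ) := by
  funext τ
  have h : sem tsem asem (.iter C e e')
      = ⨆ n, (Phi (eeval tsem e) (eeval tsem e') (sem tsem asem C))^[n]
          (fun _ _ => 0) := rfl
  rw [h, iSup_apply, iSup_apply]
  simp only [phi_iterate tsem asem C e e']
  exact iSup_sum_range _
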